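/- In the greedy parallel energy schedule on a path of k particles, once a particle P_i has received energy for the first time, in every subsequent parallel round P_i receives α energy until its battery is full, and P_i transfers α energy to P_{i+1} in every subsequent round until P_{i+1}'s battery is full. -/
import Mathlib

open scoped Classical

/-- Energy received by particle `j` in one greedy parallel round. -/
noncomputable def recvE (α κ' : ℝ) (B : ℕ → ℝ) (j : ℕ) : ℝ :=
  if j = 0 then min α (κ' - B 0)
  else if α ≤ B (j - 1) ∧ B j < κ' then min α (κ' - B j) else 0

/-- Energy sent by particle `j` to `j+1` in one greedy parallel round. -/
noncomputable def sendE (α κ' : ℝ) (k : ℕ) (B : ℕ → ℝ) (j : ℕ) : ℝ :=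
  if j + 1 < k then recvE α κ' B (j + 1) else 0

/-- One greedy parallel round of the energy schedule on a path of `k` particles. -/
noncomputable def stepE (α κ' : ℝ) (k : ℕ) (B : ℕ → ℝ) : ℕ → ℝ :=
  fun j => B j + recvE α κ' B j - sendE α κ' k B j

section Aux

variable {k N : ℕ} {α κ' : ℝ} {B : ℕ → ℝ}

/-- All batteries are multiples of α, bounded by N·α. -/
def EMul (k N : ℕ) (α : ℝ) (B : ℕ → ℝ) : Prop := ∀ j < k, ∃ m : ℕ, m ≤ N ∧ B j = m * α

/-- The full invariant. -/
def EInv (k N : ℕ) (α κ' : ℝ) (B : ℕ → ℝ) : Prop :=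
  EMul k N α B ∧
  ∀ j, j + 2 ≤ k → B j = 0 →
    B (j+1) = 0 ∨ (B (j+1) = κ' ∧ ∀ m, j = m + 1 → B m = κ')

lemma alpha_le_kappa (hα : 0 < α) (hκ : κ' = (N:ℝ)*α) (hN : 0 < N) : α ≤ κ' := by
  have h1 : (1:ℝ) ≤ (N:ℝ) := by exact_mod_cast hN
  rw [hκ]; nlinarith

lemma kappa_pos (hα : 0 < α) (hκ : κ' = (N:ℝ)*α) (hN : 0 < N) : 0 < κ' :=
  lt_of_lt_of_le hα (alpha_le_kappa hα hκ hN)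

lemma B_nonneg (hα : 0 < α) (hM : EMul k N α B) {j : ℕ} (hj : j < k) : 0 ≤ B j := by
  obtain ⟨m, _, he⟩ := hM j hj; rw [he]; positivity

lemma B_le (hα : 0 < α) (hκ : κ' = (N:ℝ)*α) (hM : EMul k N α B) {j : ℕ} (hj : j < k) :
    B j ≤ κ' := by
  obtain ⟨m, hm, he⟩ := hM j hj
  have : (m:ℝ) ≤ (N:ℝ) := Nat.cast_le.mpr hm
  rw [he, hκ]; nlinarith

lemma egap (hα : 0 < α) (hκ : κ' = (N:ℝ)*α) (hM : EMul k N α B) {j : ℕ} (hj : j < k)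
    (h : B j < κ') : B j + α ≤ κ' := by
  obtain ⟨m, hm, he⟩ := hM j hj
  have hmN : m < N := by
    by_contra h'
    have : (N:ℝ) ≤ (m:ℝ) := Nat.cast_le.mpr (le_of_not_gt h')
    rw [he, hκ] at h; nlinarith
  have h1 : ((m:ℝ)+1) ≤ (N:ℝ) := by exact_mod_cast hmN
  rw [he, hκ]; nlinarith

lemma esmall_zero (hα : 0 < α) (hM : EMul k N α B) {j : ℕ} (hj : j < k) (h : B j < α) :
    B j = 0 := by
  obtain ⟨m, hm, he⟩ := hM j hj
  have hm0 : m = 0 := by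
    by_contra h'
    have : (1:ℝ) ≤ (m:ℝ) := by exact_mod_cast Nat.one_le_iff_ne_zero.mpr h'
    rw [he] at h; nlinarith
  simp [he, hm0]

lemma recv_eq_alpha (hα : 0 < α) (hκ : κ' = (N:ℝ)*α) (hN : 0 < N) (hM : EMul k N α B)
    {j : ℕ} (hj : j < k) (hc : j = 0 ∨ α ≤ B (j-1)) (hlt : B j < κ') :
    recvE α κ' B j = α := by
  have hmin : min α (κ' - B j) = α := min_eq_left (by linarith [egap hα hκ hM hj hlt])
  rcases eq_or_ne j 0 with h0 | h0
  · subst h0; simpa [recvE] using hmin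
  · have hc' : α ≤ B (j-1) := hc.resolve_left h0
    simp only [recvE, if_neg h0, if_pos (⟨hc', hlt⟩ : α ≤ B (j-1) ∧ B j < κ')]
    exact hmin

lemma recv_full (hα : 0 < α) {j : ℕ} (h : B j = κ') : recvE α κ' B j = 0 := by
  rcases eq_or_ne j 0 with h0 | h0
  · subst h0
    simp only [recvE, if_pos rfl]
    rw [h, sub_self]
    exact min_eq_right hα.le
  · simp only [recvE, if_neg h0]
    rw [if_neg]
    rintro ⟨-, hlt⟩
    rw [h] at hlt
    exact lt_irrefl _ hlt

lemma recv_cases (hα : 0 < α) (hκ : κ' = (N:ℝ)*α) (hN : 0 < N) (hM : EMul k N α B)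
    {j : ℕ} (hj : j < k) :
    (recvE α κ' B j = α ∧ B j < κ' ∧ (j = 0 ∨ α ≤ B (j-1))) ∨
    (recvE α κ' B j = 0 ∧ (B j = κ' ∨ (j ≠ 0 ∧ B (j-1) = 0))) := by
  rcases eq_or_ne j 0 with h0 | h0
  · subst h0
    by_cases hlt : B 0 < κ'
    · exact Or.inl ⟨recv_eq_alpha hα hκ hN hM hj (Or.inl rfl) hlt, hlt, Or.inl rfl⟩
    · have hf : B 0 = κ' := le_antisymm (B_le hα hκ hM hj) (not_lt.1 hlt)
      exact Or.inr ⟨recv_full hα hf, Or.inl hf⟩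
  · by_cases hcnd : α ≤ B (j-1) ∧ B j < κ'
    · exact Or.inl ⟨recv_eq_alpha hα hκ hN hM hj (Or.inr hcnd.1) hcnd.2, hcnd.2,
        Or.inr hcnd.1⟩
    · right
      refine ⟨by simp only [recvE, if_neg h0, if_neg hcnd], ?_⟩
      by_cases hle : α ≤ B (j-1)
      · have hnlt : ¬ B j < κ' := fun h => hcnd ⟨hle, h⟩
        exact Or.inl (le_antisymm (B_le hα hκ hM hj) (not_lt.1 hnlt))
      · exact Or.inr ⟨h0, esmall_zero hα hM (lt_of_le_of_lt (Nat.sub_le j 1) hj)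
          (lt_of_not_ge hle)⟩

lemma recv_nonneg (hα : 0 < α) (hκ : κ' = (N:ℝ)*α) (hN : 0 < N) (hM : EMul k N α B)
    {j : ℕ} (hj : j < k) : 0 ≤ recvE α κ' B j := by
  rcases recv_cases hα hκ hN hM hj with ⟨h, -, -⟩ | ⟨h, -⟩
  · rw [h]; exact hα.le
  · rw [h]

lemma send_cases (hα : 0 < α) (hκ : κ' = (N:ℝ)*α) (hN : 0 < N) (hM : EMul k N α B)
    (j : ℕ) :
    (sendE α κ' k B j = α ∧ j + 1 < k ∧ α ≤ B j ∧ B (j+1) < κ') ∨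
    sendE α κ' k B j = 0 := by
  by_cases hk1 : j + 1 < k
  · rcases recv_cases hα hκ hN hM hk1 with ⟨hr, hlt, hc⟩ | ⟨hr, -⟩
    · left
      have hcj : α ≤ B j := by
        rcases hc with h | h
        · exact absurd h (Nat.succ_ne_zero j)
        · simpa using h
      exact ⟨by simp [sendE, if_pos hk1, hr], hk1, hcj, hlt⟩
    · right; simp [sendE, if_pos hk1, hr]
  · right; simp [sendE, if_neg hk1]

lemma inv_step (hα : 0 < α) (hκ : κ' = (N:ℝ)*α) (hN : 0 < N)
    (hI : EInv k N α κ' B) : EInv k N α κ' (stepE α κ' k B) := by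
  obtain ⟨hM, h2⟩ := hI
  have hκpos := kappa_pos hα hκ hN
  have hstep : ∀ i, stepE α κ' k B i = B i + recvE α κ' B i - sendE α κ' k B i :=
    fun _ => rfl
  constructor
  · intro j hj
    obtain ⟨m, hm, he⟩ := hM j hj
    rcases recv_cases hα hκ hN hM hj with ⟨hr, hlt, -⟩ | ⟨hr, -⟩ <;>
      rcases send_cases hα hκ hN hM j with ⟨hs, -, hsle, -⟩ | hs
    · exact ⟨m, hm, by rw [hstep, hr, hs, he]; ring⟩
    · refine ⟨m+1, ?_, ?_⟩
      · by_contra h'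
        have hNm : (N:ℝ) ≤ (m:ℝ) := Nat.cast_le.mpr (by omega)
        rw [he, hκ] at hlt; nlinarith
      · rw [hstep, hr, hs, he]; push_cast; ring
    · have h1 : 1 ≤ m := by
        by_contra h'
        have hm0 : m = 0 := by omega
        rw [he, hm0] at hsle; push_cast at hsle; nlinarith
      refine ⟨m-1, by omega, ?_⟩
      rw [hstep, hr, hs, he, Nat.cast_sub h1]
      push_cast; ring
    · exact ⟨m, hm, by rw [hstep, hr, hs, he]; ring⟩
  · intro j hjk hB'
    have hj : j < k := by omega
    have hj1 : j + 1 < k := by omega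
    rcases recv_cases hα hκ hN hM hj with ⟨hr, hlt, hc⟩ | ⟨hr, hrc⟩ <;>
      rcases send_cases hα hκ hN hM j with ⟨hs, -, hsle, hslt⟩ | hs
    · -- r = α, s = α : impossible
      rw [hstep, hr, hs] at hB'
      have : B j = 0 := by linarith
      rw [this] at hsle; linarith
    · -- r = α, s = 0 : impossible
      rw [hstep, hr, hs] at hB'
      have := B_nonneg hα hM hj
      linarith
    · -- r = 0, s = α : B j = α, "case (b)"
      rw [hstep, hr, hs] at hB'
      have hBj : B j = α := by linarith
      have hak : α = κ' := by
        rcases hrc with hf | ⟨h0, hpz⟩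
        · rw [hBj] at hf; exact hf
        · have hj1k : (j-1) + 2 ≤ k := by omega
          have hh := h2 (j-1) hj1k hpz
          rw [show j - 1 + 1 = j by omega] at hh
          rcases hh with h | ⟨h, -⟩
          · rw [hBj] at h; linarith
          · rw [hBj] at h; exact h
      right
      have hBj1 : B (j+1) = 0 := esmall_zero hα hM hj1 (by rw [hak]; exact hslt)
      have hrj1 : recvE α κ' B (j+1) = α := by
        apply recv_eq_alpha hα hκ hN hM hj1 (Or.inr ?_) (by rw [hBj1]; exact hκpos)
        simp only [Nat.add_sub_cancel]
        rw [hBj]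
      have hsj1 : sendE α κ' k B (j+1) = 0 := by
        rcases send_cases hα hκ hN hM (j+1) with ⟨-, -, hle, -⟩ | h
        · rw [hBj1] at hle; linarith
        · exact h
      constructor
      · rw [hstep, hrj1, hsj1, hBj1, hak]; ring
      · intro m hm
        have hmj : m + 1 = j := hm.symm
        have hmk : m < k := by omega
        have hsm : sendE α κ' k B m = 0 := by
          simp only [sendE, if_pos (show m+1 < k by omega)]
          rw [hmj]; exact hr
        rw [hstep, hsm]
        by_cases hBm : B m = κ'
        · rw [recv_full hα hBm, hBm]; ring
        · have hmlt : B m < κ' := lt_of_le_of_ne (B_le hα hκ hM hmk) hBm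
          have hm0 : B m = 0 := esmall_zero hα hM hmk (by rw [hak]; exact hmlt)
          have hrm : recvE α κ' B m = α := by
            apply recv_eq_alpha hα hκ hN hM hmk ?_ hmlt
            rcases eq_or_ne m 0 with h0 | h0
            · exact Or.inl h0
            · right
              have hmk2 : m + 2 ≤ k := by omega
              rcases h2 m hmk2 hm0 with h | ⟨-, hpp⟩
              · rw [hmj, hBj] at h; exfalso; linarith
              · have hq := hpp (m-1) (by omega)
                rw [hq]; exact alpha_le_kappa hα hκ hN
          rw [hrm, hm0, hak]; ring
    · -- r = 0, s = 0 : B j = 0, "case (a)"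
      rw [hstep, hr, hs] at hB'
      have hBj0 : B j = 0 := by linarith
      rcases hrc with hf | ⟨h0, hpz⟩
      · rw [hBj0] at hf; exfalso; linarith
      rcases h2 j hjk hBj0 with h | ⟨-, hpp⟩
      · left
        have hr1 : recvE α κ' B (j+1) = 0 := by
          rcases recv_cases hα hκ hN hM hj1 with ⟨-, -, hc1⟩ | ⟨h1, -⟩
          · exfalso
            rcases hc1 with hz | hle
            · exact Nat.succ_ne_zero j hz
            · simp only [Nat.add_sub_cancel] at hle
              rw [hBj0] at hle; linarith
          · exact h1
        have hs1 : sendE α κ' k B (j+1) = 0 := by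
          rcases send_cases hα hκ hN hM (j+1) with ⟨-, -, hle, -⟩ | hh
          · rw [h] at hle; exfalso; linarith
          · exact hh
        rw [hstep, hr1, hs1, h]; ring
      · exfalso
        have hq := hpp (j-1) (by omega)
        rw [hpz] at hq; linarith

lemma act_step (hα : 0 < α) (hκ : κ' = (N:ℝ)*α) (hN : 0 < N)
    (hI : EInv k N α κ' B) {j : ℕ} (hjk : j + 1 < k)
    (H : α ≤ B j ∨ B (j+1) = κ') :
    α ≤ stepE α κ' k B j ∨ stepE α κ' k B (j+1) = κ' := by
  obtain ⟨hM, h2⟩ := hI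
  have hκpos := kappa_pos hα hκ hN
  have hj : j < k := by omega
  have hstep : ∀ i, stepE α κ' k B i = B i + recvE α κ' B i - sendE α κ' k B i :=
    fun _ => rfl
  by_cases hfull : B (j+1) = κ'
  · have hr1 : recvE α κ' B (j+1) = 0 := recv_full hα hfull
    have hsj : sendE α κ' k B j = 0 := by simp [sendE, if_pos hjk, hr1]
    rcases send_cases hα hκ hN hM (j+1) with ⟨hs1, hj2k, hle1, hlt2⟩ | hs1
    · left
      rw [hstep, hsj]
      by_cases hBj : α ≤ B j
      · have := recv_nonneg hα hκ hN hM hj; linarith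
      · have hBj0 : B j = 0 := esmall_zero hα hM hj (lt_of_not_ge hBj)
        have hrj : recvE α κ' B j = α := by
          apply recv_eq_alpha hα hκ hN hM hj ?_ (by rw [hBj0]; exact hκpos)
          rcases eq_or_ne j 0 with h0 | h0
          · exact Or.inl h0
          · right
            have hjk2 : j + 2 ≤ k := by omega
            rcases h2 j hjk2 hBj0 with h | ⟨-, hpp⟩
            · rw [hfull] at h; exfalso; linarith
            · have hq := hpp (j-1) (by omega)
              rw [hq]; exact alpha_le_kappa hα hκ hN
        rw [hrj, hBj0]; linarith
    · right; rw [hstep, hr1, hs1, hfull]; ring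
  · have hBj : α ≤ B j := H.resolve_right hfull
    have hlt1 : B (j+1) < κ' := lt_of_le_of_ne (B_le hα hκ hM hjk) hfull
    have hr1 : recvE α κ' B (j+1) = α :=
      recv_eq_alpha hα hκ hN hM hjk (Or.inr (by simpa using hBj)) hlt1
    have hsj : sendE α κ' k B j = α := by simp [sendE, if_pos hjk, hr1]
    by_cases h2a : α + α ≤ B j
    · left
      rw [hstep, hsj]
      have := recv_nonneg hα hκ hN hM hj; linarith
    · have hBja : B j = α := by
        obtain ⟨m, hm, he⟩ := hM j hj
        have h1 : 1 ≤ m := by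
          by_contra h'
          have hm0 : m = 0 := by omega
          rw [he, hm0] at hBj; push_cast at hBj; nlinarith
        have h2m : m < 2 := by
          by_contra h'
          have hc2 : (2:ℝ) ≤ (m:ℝ) := by exact_mod_cast (by omega : 2 ≤ m)
          rw [he] at h2a; exact h2a (by nlinarith)
        have hm1 : m = 1 := by omega
        rw [he, hm1]; push_cast; ring
      by_cases hfj : B j = κ'
      · right
        have hak : α = κ' := by rw [← hBja]; exact hfj
        have hB10 : B (j+1) = 0 := esmall_zero hα hM hjk (by rw [hak]; exact hlt1)
        have hs1 : sendE α κ' k B (j+1) = 0 := by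
          rcases send_cases hα hκ hN hM (j+1) with ⟨-, -, hle, -⟩ | hh
          · rw [hB10] at hle; exfalso; linarith
          · exact hh
        rw [hstep, hr1, hs1, hB10, hak]; ring
      · left
        have hltj : B j < κ' := lt_of_le_of_ne (B_le hα hκ hM hj) hfj
        have hrj : recvE α κ' B j = α := by
          apply recv_eq_alpha hα hκ hN hM hj ?_ hltj
          rcases eq_or_ne j 0 with h0 | h0
          · exact Or.inl h0
          · by_cases hle : α ≤ B (j-1)
            · exact Or.inr hle
            · exfalso
              have hpz : B (j-1) = 0 :=
                esmall_zero hα hM (show j - 1 < k by omega) (lt_of_not_ge hle)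
              have hjk2 : (j-1) + 2 ≤ k := by omega
              rcases h2 (j-1) hjk2 hpz with h | ⟨h, -⟩ <;>
                rw [show j - 1 + 1 = j by omega] at h
              · rw [hBja] at h; linarith
              · exact hfj h
        rw [hstep, hrj, hsj, hBja]; linarith

lemma step_ge (hα : 0 < α) (hκ : κ' = (N:ℝ)*α) (hN : 0 < N)
    (hI : EInv k N α κ' B) {i : ℕ} (hik : i < k) (hlt : B i < κ')
    (hc : i = 0 ∨ α ≤ B (i-1)) : α ≤ stepE α κ' k B i := by
  obtain ⟨hM, -⟩ := hI
  have hr : recvE α κ' B i = α := recv_eq_alpha hα hκ hN hM hik hc hlt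
  have hstep : stepE α κ' k B i = B i + recvE α κ' B i - sendE α κ' k B i := rfl
  rcases send_cases hα hκ hN hM i with ⟨hs, -, hle, -⟩ | hs
  · rw [hstep, hr, hs]; linarith
  · rw [hstep, hr, hs]; have := B_nonneg hα hM hik; linarith

lemma inv_iter (hα : 0 < α) (hκ : κ' = (N:ℝ)*α) (hN : 0 < N) :
    ∀ t, EInv k N α κ' ((stepE α κ' k)^[t] (fun _ => 0)) := by
  intro t
  induction t with
  | zero =>
    constructor
    · intro j _; exact ⟨0, Nat.zero_le _, by simp⟩
    · intro j _ _; left; rfl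
  | succ n ih =>
    rw [Function.iterate_succ_apply']
    exact inv_step hα hκ hN ih

end Aux

/-- In the greedy parallel energy schedule on a path of `k` particles (starting
from all batteries empty), once particle `P_i` has received energy for the first time (in some
round `t`), then in every subsequent round it receives exactly `α` energy until its battery is
full, and it transfers exactly `α` energy to `P_{i+1}` in every subsequent round until
`P_{i+1}`'s battery is full. -/
theorem greedy_parallel_pipelining (k N : ℕ) (α κ' : ℝ)
    (hα : 0 < α) (hκ : κ' = (N : ℝ) * α) (hN : 0 < N)
    (i : ℕ) (hik : i < k) (t : ℕ)
    (hfirst : 0 < recvE α κ' ((stepE α κ' k)^[t] (fun _ => 0)) i) :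
    ∀ s, t < s →
      (((stepE α κ' k)^[s] (fun _ => 0)) i < κ' →
        recvE α κ' ((stepE α κ' k)^[s] (fun _ => 0)) i = α) ∧
      (i + 1 < k → ((stepE α κ' k)^[s] (fun _ => 0)) (i + 1) < κ' →
        sendE α κ' k ((stepE α κ' k)^[s] (fun _ => 0)) i = α) := by
  intro s hts
  have hIter : ∀ u, (stepE α κ' k)^[u+1] (fun _ => (0:ℝ)) =
      stepE α κ' k ((stepE α κ' k)^[u] (fun _ => 0)) :=
    fun u => Function.iterate_succ_apply' _ u _
  have hInv : ∀ u, EInv k N α κ' ((stepE α κ' k)^[u] (fun _ => 0)) :=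
    inv_iter hα hκ hN
  -- facts at time t from hfirst
  have hfacts : ((stepE α κ' k)^[t] (fun _ => 0)) i < κ' ∧
      (i = 0 ∨ α ≤ ((stepE α κ' k)^[t] (fun _ => 0)) (i-1)) := by
    rcases eq_or_ne i 0 with h0 | h0
    · subst h0
      have hmin : 0 < min α (κ' - ((stepE α κ' k)^[t] fun _ => 0) 0) := by
        simpa [recvE] using hfirst
      have := (lt_min_iff.mp hmin).2
      exact ⟨by linarith, Or.inl rfl⟩
    · by_cases hcnd : α ≤ ((stepE α κ' k)^[t] fun _ => 0) (i-1) ∧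
          ((stepE α κ' k)^[t] fun _ => 0) i < κ'
      · exact ⟨hcnd.2, Or.inr hcnd.1⟩
      · exfalso
        have hz : recvE α κ' ((stepE α κ' k)^[t] fun _ => 0) i = 0 := by
          simp only [recvE, if_neg h0, if_neg hcnd]
        rw [hz] at hfirst; exact lt_irrefl 0 hfirst
  -- the activation invariant, persistent from time t+1 on
  have key : ∀ n,
      (i = 0 ∨ (α ≤ ((stepE α κ' k)^[t+1+n] fun _ => 0) (i-1) ∨
        ((stepE α κ' k)^[t+1+n] fun _ => 0) i = κ')) ∧
      (i + 1 < k → (α ≤ ((stepE α κ' k)^[t+1+n] fun _ => 0) i ∨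
        ((stepE α κ' k)^[t+1+n] fun _ => 0) (i+1) = κ')) := by
    intro n
    induction n with
    | zero =>
      constructor
      · rcases eq_or_ne i 0 with h0 | h0
        · exact Or.inl h0
        · right
          have hi1 : (i-1) + 1 = i := by omega
          have hact := act_step hα hκ hN (hInv t) (j := i-1)
            (show (i-1)+1 < k by omega) (Or.inl (hfacts.2.resolve_left h0))
          rw [hi1] at hact
          rw [show t+1+0 = t+1 from rfl, hIter t]
          exact hact
      · intro _
        left
        rw [show t+1+0 = t+1 from rfl, hIter t]
        exact step_ge hα hκ hN (hInv t) hik hfacts.1 hfacts.2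
    | succ n ih =>
      have hstep_eq : (stepE α κ' k)^[t+1+(n+1)] (fun _ => (0:ℝ)) =
          stepE α κ' k ((stepE α κ' k)^[t+1+n] fun _ => 0) := by
        rw [show t+1+(n+1) = (t+1+n)+1 by omega, hIter]
      constructor
      · rcases eq_or_ne i 0 with h0 | h0
        · exact Or.inl h0
        · right
          have hi1 : (i-1) + 1 = i := by omega
          have hprev : α ≤ ((stepE α κ' k)^[t+1+n] fun _ => 0) (i-1) ∨
              ((stepE α κ' k)^[t+1+n] fun _ => 0) ((i-1)+1) = κ' := by
            rw [hi1]; exact ih.1.resolve_left h0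
          have hact := act_step hα hκ hN (hInv (t+1+n)) (j := i-1)
            (show (i-1)+1 < k by omega) hprev
          rw [hi1] at hact
          rw [hstep_eq]
          exact hact
      · intro hik1
        have hact := act_step hα hκ hN (hInv (t+1+n)) (j := i) hik1 (ih.2 hik1)
        rw [hstep_eq]
        exact hact
  obtain ⟨n, rfl⟩ : ∃ n, s = t+1+n := ⟨s - (t+1), by omega⟩
  have hk := key n
  have hMs := (hInv (t+1+n)).1
  constructor
  · intro hlt
    apply recv_eq_alpha hα hκ hN hMs hik ?_ hlt
    rcases hk.1 with h0 | h
    · exact Or.inl h0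
    · rcases h with h | h
      · exact Or.inr h
      · exact absurd h (ne_of_lt hlt)
  · intro hik1 hlt1
    have hle : α ≤ ((stepE α κ' k)^[t+1+n] fun _ => 0) i := by
      rcases hk.2 hik1 with h | h
      · exact h
      · exact absurd h (ne_of_lt hlt1)
    have hr : recvE α κ' ((stepE α κ' k)^[t+1+n] fun _ => 0) (i+1) = α :=
      recv_eq_alpha hα hκ hN hMs hik1 (Or.inr (by simpa using hle)) hlt1
    simp [sendE, if_pos hik1, hr]
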